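/- Let ⟨F,w⟩ = ⟨⟨W,R⁺,R⁻⟩,w⟩ be a bi-relational pointed fuzzy frame and φ ∈ L_inv(2). Then φ is KGinv(2)-valid on ⟨F,w⟩ if and only if B → φ^⋈ is strongly valid on ⟨F,w⟩ in KGbl. -/
import Mathlib



noncomputable def Gimp (x y : ℝ) : ℝ := if x ≤ y then 1 else y

inductive Fml2 : Type
  | var : ℕ → Fml2
  | inv : Fml2 → Fml2
  | and : Fml2 → Fml2 → Fml2
  | imp : Fml2 → Fml2 → Fml2
  | box1 : Fml2 → Fml2
  | dia1 : Fml2 → Fml2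
  | box2 : Fml2 → Fml2
  | dia2 : Fml2 → Fml2

noncomputable def Fml2.eval {W : Type} (Rp Rm : W → W → ℝ) (v : ℕ → W → ℝ) : Fml2 → W → ℝ
  | .var p, w => v p w
  | .inv φ, w => 1 - Fml2.eval Rp Rm v φ w
  | .and φ χ, w => min (Fml2.eval Rp Rm v φ w) (Fml2.eval Rp Rm v χ w)
  | .imp φ χ, w => Gimp (Fml2.eval Rp Rm v φ w) (Fml2.eval Rp Rm v χ w)
  | .box1 φ, w => sInf (Set.range fun w' => Gimp (Rp w w') (Fml2.eval Rp Rm v φ w'))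
  | .dia1 φ, w => sSup (Set.range fun w' => min (Rp w w') (Fml2.eval Rp Rm v φ w'))
  | .box2 φ, w => sInf (Set.range fun w' => Gimp (Rm w w') (Fml2.eval Rp Rm v φ w'))
  | .dia2 φ, w => sSup (Set.range fun w' => min (Rm w w') (Fml2.eval Rp Rm v φ w'))

inductive Lbl : Type
  | var : ℕ → Lbl
  | neg : Lbl → Lbl
  | and : Lbl → Lbl → Lbl
  | imp : Lbl → Lbl → Lbl
  | box : Lbl → Lbl
  | dia : Lbl → Lbl
  | conf : Lbl → Lbl
  | sAnd : Lbl → Lbl → Lbl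
  | sImp : Lbl → Lbl → Lbl
  | bbox : Lbl → Lbl
  | bdia : Lbl → Lbl

noncomputable def Lbl.eval {W : Type} (Rp Rm : W → W → ℝ) (v1 v2 : ℕ → W → ℝ) :
    Lbl → W → ℝ × ℝ
  | .var p, w => (v1 p w, v2 p w)
  | .neg φ, w => ((Lbl.eval Rp Rm v1 v2 φ w).2, (Lbl.eval Rp Rm v1 v2 φ w).1)
  | .conf φ, w => (1 - (Lbl.eval Rp Rm v1 v2 φ w).2, 1 - (Lbl.eval Rp Rm v1 v2 φ w).1)
  | .and φ χ, w =>
      (min (Lbl.eval Rp Rm v1 v2 φ w).1 (Lbl.eval Rp Rm v1 v2 χ w).1,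
       max (Lbl.eval Rp Rm v1 v2 φ w).2 (Lbl.eval Rp Rm v1 v2 χ w).2)
  | .imp φ χ, w =>
      (Gimp (Lbl.eval Rp Rm v1 v2 φ w).1 (Lbl.eval Rp Rm v1 v2 χ w).1,
       if (Lbl.eval Rp Rm v1 v2 χ w).2 ≤ (Lbl.eval Rp Rm v1 v2 φ w).2 then 0
       else (Lbl.eval Rp Rm v1 v2 χ w).2)
  | .sAnd φ χ, w =>
      (min (Lbl.eval Rp Rm v1 v2 φ w).1 (Lbl.eval Rp Rm v1 v2 χ w).1,
       min (Lbl.eval Rp Rm v1 v2 φ w).2 (Lbl.eval Rp Rm v1 v2 χ w).2)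
  | .sImp φ χ, w =>
      (Gimp (Lbl.eval Rp Rm v1 v2 φ w).1 (Lbl.eval Rp Rm v1 v2 χ w).1,
       Gimp (Lbl.eval Rp Rm v1 v2 φ w).2 (Lbl.eval Rp Rm v1 v2 χ w).2)
  | .box φ, w =>
      (sInf (Set.range fun w' => Gimp (Rp w w') (Lbl.eval Rp Rm v1 v2 φ w').1),
       sSup (Set.range fun w' => min (Rm w w') (Lbl.eval Rp Rm v1 v2 φ w').2))
  | .dia φ, w =>
      (sSup (Set.range fun w' => min (Rp w w') (Lbl.eval Rp Rm v1 v2 φ w').1),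
       sInf (Set.range fun w' => Gimp (Rm w w') (Lbl.eval Rp Rm v1 v2 φ w').2))
  | .bbox φ, w =>
      (sInf (Set.range fun w' => Gimp (Rp w w') (Lbl.eval Rp Rm v1 v2 φ w').1),
       sInf (Set.range fun w' => Gimp (Rm w w') (Lbl.eval Rp Rm v1 v2 φ w').2))
  | .bdia φ, w =>
      (sSup (Set.range fun w' => min (Rp w w') (Lbl.eval Rp Rm v1 v2 φ w').1),
       sSup (Set.range fun w' => min (Rm w w') (Lbl.eval Rp Rm v1 v2 φ w').2))

/-- KGinv(2)-validity on a pointed frame. -/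
def Valid2 {W : Type} (Rp Rm : W → W → ℝ) (φ : Fml2) (w : W) : Prop :=
  ∀ v : ℕ → W → ℝ, (∀ p u, v p u ∈ Set.Icc (0:ℝ) 1) → Fml2.eval Rp Rm v φ w = 1

/-- v₁-validity on a pointed frame. -/
def V1Valid {W : Type} (Rp Rm : W → W → ℝ) (φ : Lbl) (w : W) : Prop :=
  ∀ v1 v2 : ℕ → W → ℝ, (∀ p u, v1 p u ∈ Set.Icc (0:ℝ) 1) →
    (∀ p u, v2 p u ∈ Set.Icc (0:ℝ) 1) → (Lbl.eval Rp Rm v1 v2 φ w).1 = 1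

/-- v₂-validity on a pointed frame. -/
def V2Valid {W : Type} (Rp Rm : W → W → ℝ) (φ : Lbl) (w : W) : Prop :=
  ∀ v1 v2 : ℕ → W → ℝ, (∀ p u, v1 p u ∈ Set.Icc (0:ℝ) 1) →
    (∀ p u, v2 p u ∈ Set.Icc (0:ℝ) 1) → (Lbl.eval Rp Rm v1 v2 φ w).2 = 0

/-- Strong validity on a pointed frame. -/
def StrongValid {W : Type} (Rp Rm : W → W → ℝ) (φ : Lbl) (w : W) : Prop :=
  V1Valid Rp Rm φ w ∧ V2Valid Rp Rm φ w

/-- The ⋈ translation from L_inv(2) to Lbl: □₁ ↦ □, ◇₁ ↦ ◇, □₂ ↦ ¬◇¬, ◇₂ ↦ ¬□¬,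
¬ᵢ ↦ ¬− . -/
def Fml2.toBl : Fml2 → Lbl
  | .var p => .var p
  | .inv φ => .neg (.conf φ.toBl)
  | .and φ χ => .and φ.toBl χ.toBl
  | .imp φ χ => .imp φ.toBl χ.toBl
  | .box1 φ => .box φ.toBl
  | .dia1 φ => .dia φ.toBl
  | .box2 φ => .neg (.dia (.neg φ.toBl))
  | .dia2 φ => .neg (.box (.neg φ.toBl))

def Lbl.B : Lbl := .sImp (.var 0) (.var 0)

lemma Gimp_mem {x y : ℝ} (hy : y ∈ Set.Icc (0:ℝ) 1) : Gimp x y ∈ Set.Icc (0:ℝ) 1 := by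
  unfold Gimp; split
  · exact ⟨zero_le_one, le_refl 1⟩
  · exact hy

lemma min_mem {x y : ℝ} (hx : x ∈ Set.Icc (0:ℝ) 1) (hy : y ∈ Set.Icc (0:ℝ) 1) :
    min x y ∈ Set.Icc (0:ℝ) 1 := ⟨le_min hx.1 hy.1, min_le_of_left_le hx.2⟩

lemma max_mem {x y : ℝ} (hx : x ∈ Set.Icc (0:ℝ) 1) (hy : y ∈ Set.Icc (0:ℝ) 1) :
    max x y ∈ Set.Icc (0:ℝ) 1 := ⟨le_max_of_le_left hx.1, max_le hx.2 hy.2⟩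

lemma one_sub_mem {x : ℝ} (hx : x ∈ Set.Icc (0:ℝ) 1) : 1 - x ∈ Set.Icc (0:ℝ) 1 := by
  constructor
  · linarith [hx.2]
  · linarith [hx.1]

lemma sInf_range_mem {W : Type} [Nonempty W] (f : W → ℝ)
    (h : ∀ w, f w ∈ Set.Icc (0:ℝ) 1) : sInf (Set.range f) ∈ Set.Icc (0:ℝ) 1 := by
  obtain ⟨w⟩ := ‹Nonempty W›
  constructor
  · apply le_csInf (Set.range_nonempty f)
    rintro x ⟨u, rfl⟩; exact (h u).1
  · exact le_trans (csInf_le ⟨0, by rintro x ⟨u, rfl⟩; exact (h u).1⟩ ⟨w, rfl⟩) (h w).2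

lemma sSup_range_mem {W : Type} [Nonempty W] (f : W → ℝ)
    (h : ∀ w, f w ∈ Set.Icc (0:ℝ) 1) : sSup (Set.range f) ∈ Set.Icc (0:ℝ) 1 := by
  obtain ⟨w⟩ := ‹Nonempty W›
  constructor
  · exact le_trans (h w).1 (le_csSup ⟨1, by rintro x ⟨u, rfl⟩; exact (h u).2⟩ ⟨w, rfl⟩)
  · apply csSup_le (Set.range_nonempty f)
    rintro x ⟨u, rfl⟩; exact (h u).2

lemma Fml2.eval_mem {W : Type} [Nonempty W] {Rp Rm : W → W → ℝ}
    (hRp : ∀ w w', Rp w w' ∈ Set.Icc (0:ℝ) 1)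
    (hRm : ∀ w w', Rm w w' ∈ Set.Icc (0:ℝ) 1)
    {v : ℕ → W → ℝ} (hv : ∀ p u, v p u ∈ Set.Icc (0:ℝ) 1) (φ : Fml2) (w : W) :
    Fml2.eval Rp Rm v φ w ∈ Set.Icc (0:ℝ) 1 := by
  induction φ generalizing w with
  | var p => exact hv p w
  | inv φ ih => exact one_sub_mem (ih w)
  | and φ χ ih1 ih2 => exact min_mem (ih1 w) (ih2 w)
  | imp φ χ ih1 ih2 => exact Gimp_mem (ih2 w)
  | box1 φ ih => exact sInf_range_mem _ fun w' => Gimp_mem (ih w')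
  | dia1 φ ih => exact sSup_range_mem _ fun w' => min_mem (hRp w w') (ih w')
  | box2 φ ih => exact sInf_range_mem _ fun w' => Gimp_mem (ih w')
  | dia2 φ ih => exact sSup_range_mem _ fun w' => min_mem (hRm w w') (ih w')

lemma Lbl.eval_mem {W : Type} [Nonempty W] {Rp Rm : W → W → ℝ}
    (hRp : ∀ w w', Rp w w' ∈ Set.Icc (0:ℝ) 1)
    (hRm : ∀ w w', Rm w w' ∈ Set.Icc (0:ℝ) 1)
    {v1 v2 : ℕ → W → ℝ} (hv1 : ∀ p u, v1 p u ∈ Set.Icc (0:ℝ) 1)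
    (hv2 : ∀ p u, v2 p u ∈ Set.Icc (0:ℝ) 1) (φ : Lbl) (w : W) :
    (Lbl.eval Rp Rm v1 v2 φ w).1 ∈ Set.Icc (0:ℝ) 1 ∧
      (Lbl.eval Rp Rm v1 v2 φ w).2 ∈ Set.Icc (0:ℝ) 1 := by
  induction φ generalizing w with
  | var p => exact ⟨hv1 p w, hv2 p w⟩
  | neg φ ih => exact ⟨(ih w).2, (ih w).1⟩
  | conf φ ih => exact ⟨one_sub_mem (ih w).2, one_sub_mem (ih w).1⟩
  | and φ χ ih1 ih2 =>
      exact ⟨min_mem (ih1 w).1 (ih2 w).1, max_mem (ih1 w).2 (ih2 w).2⟩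
  | imp φ χ ih1 ih2 =>
      refine ⟨Gimp_mem (ih2 w).1, ?_⟩
      simp only [Lbl.eval]
      split
      · exact ⟨le_refl 0, zero_le_one⟩
      · exact (ih2 w).2
  | sAnd φ χ ih1 ih2 =>
      exact ⟨min_mem (ih1 w).1 (ih2 w).1, min_mem (ih1 w).2 (ih2 w).2⟩
  | sImp φ χ ih1 ih2 => exact ⟨Gimp_mem (ih2 w).1, Gimp_mem (ih2 w).2⟩
  | box φ ih =>
      exact ⟨sInf_range_mem _ fun w' => Gimp_mem (ih w').1,
        sSup_range_mem _ fun w' => min_mem (hRm w w') (ih w').2⟩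
  | dia φ ih =>
      exact ⟨sSup_range_mem _ fun w' => min_mem (hRp w w') (ih w').1,
        sInf_range_mem _ fun w' => Gimp_mem (ih w').2⟩
  | bbox φ ih =>
      exact ⟨sInf_range_mem _ fun w' => Gimp_mem (ih w').1,
        sInf_range_mem _ fun w' => Gimp_mem (ih w').2⟩
  | bdia φ ih =>
      exact ⟨sSup_range_mem _ fun w' => min_mem (hRp w w') (ih w').1,
        sSup_range_mem _ fun w' => min_mem (hRm w w') (ih w').2⟩

/-- Key lemma: the first component of the bl-evaluation of the translation
equals the KGinv(2)-evaluation with valuation `v1`. -/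
lemma toBl_fst {W : Type} (Rp Rm : W → W → ℝ) (v1 v2 : ℕ → W → ℝ) (φ : Fml2) (w : W) :
    (Lbl.eval Rp Rm v1 v2 φ.toBl w).1 = Fml2.eval Rp Rm v1 φ w := by
  induction φ generalizing w with
  | var p => rfl
  | inv φ ih => simp only [Fml2.toBl, Lbl.eval, Fml2.eval, ih w]
  | and φ χ ih1 ih2 => simp only [Fml2.toBl, Lbl.eval, Fml2.eval, ih1 w, ih2 w]
  | imp φ χ ih1 ih2 => simp only [Fml2.toBl, Lbl.eval, Fml2.eval, ih1 w, ih2 w]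
  | box1 φ ih =>
      simp only [Fml2.toBl, Lbl.eval, Fml2.eval]
      exact congrArg _ (congrArg Set.range (funext fun w' => by rw [ih w']))
  | dia1 φ ih =>
      simp only [Fml2.toBl, Lbl.eval, Fml2.eval]
      exact congrArg _ (congrArg Set.range (funext fun w' => by rw [ih w']))
  | box2 φ ih =>
      simp only [Fml2.toBl, Lbl.eval, Fml2.eval]
      exact congrArg _ (congrArg Set.range (funext fun w' => by rw [ih w']))
  | dia2 φ ih =>
      simp only [Fml2.toBl, Lbl.eval, Fml2.eval]
      exact congrArg _ (congrArg Set.range (funext fun w' => by rw [ih w']))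

/-- φ is KGinv(2)-valid on ⟨F,w⟩ iff B → φ^⋈ is strongly valid on ⟨F,w⟩. -/
theorem statement9 {W : Type} [Nonempty W] (Rp Rm : W → W → ℝ)
    (hRp : ∀ w w', Rp w w' ∈ Set.Icc (0:ℝ) 1)
    (hRm : ∀ w w', Rm w w' ∈ Set.Icc (0:ℝ) 1)
    (w : W) (φ : Fml2) :
    Valid2 Rp Rm φ w ↔ StrongValid Rp Rm (.imp Lbl.B φ.toBl) w := by
  have hB : ∀ (v1 v2 : ℕ → W → ℝ), Lbl.eval Rp Rm v1 v2 Lbl.B w = (1, 1) := by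
    intro v1 v2
    simp [Lbl.B, Lbl.eval, Gimp]
  constructor
  · rintro h
    constructor
    · intro v1 v2 hv1 hv2
      simp only [Lbl.eval, hB v1 v2, toBl_fst, h v1 hv1]
      simp [Gimp]
    · intro v1 v2 hv1 hv2
      simp only [Lbl.eval, Lbl.B]
      rw [if_pos (by
        rw [show Gimp (v2 0 w) (v2 0 w) = 1 from by simp [Gimp]]
        exact (Lbl.eval_mem hRp hRm hv1 hv2 φ.toBl w).2.2)]
  · rintro ⟨h1, h2⟩ v hv
    have := h1 v v hv hv
    simp only [Lbl.eval, Lbl.B, toBl_fst] at this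
    rw [show Gimp (v 0 w) (v 0 w) = 1 from by simp [Gimp]] at this
    have hb := (Fml2.eval_mem hRp hRm hv φ w).2
    unfold Gimp at this
    split at this
    next h => linarith
    next h => exact this
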